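/- Let V be a finite-dimensional real vector space and L ⊆ 𝕋_ℂV a lagrangian subspace. With E := pr_{V_ℂ}(L), Δ := (E ∩ Ē) ∩ V, D := (E + Ē) ∩ V, order s := dim_ℝ V − dim_ℝ D and type k := dim_ℂ(E + Ē) − dim_ℂ E, the following identities hold: k = (1/2)(dim_ℝ D − dim_ℝ Δ) and k + s = dim_ℂ V_ℂ − dim_ℂ E. -/

import Mathlib

open TensorProduct Module

noncomputable section

namespace CDirac


/-- The real generalized tangent space `V ⊕ V*`. -/
abbrev TR (V : Type*) [AddCommGroup V] [Module ℝ V] := V × (V →ₗ[ℝ] ℝ)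

variable {V : Type*} [AddCommGroup V] [Module ℝ V]

/-- The canonical pairing `⟨X+ξ, Y+η⟩ = (η X + ξ Y)/2` on `𝕋V`. -/
def pairR (a b : TR V) : ℝ := (b.2 a.1 + a.2 b.1) / 2

lemma pairR_add_left (a a' b : TR V) : pairR (a + a') b = pairR a b + pairR a' b := by
  simp only [pairR, Prod.fst_add, Prod.snd_add, map_add, LinearMap.add_apply]
  ring

lemma pairR_smul_left (c : ℝ) (a b : TR V) : pairR (c • a) b = c * pairR a b := by
  simp only [pairR, Prod.smul_fst, Prod.smul_snd, map_smul, LinearMap.smul_apply,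
    smul_eq_mul]
  ring

/-- Orthogonal complement with respect to the pairing on `𝕋V`. -/
def orthR (L : Submodule ℝ (TR V)) : Submodule ℝ (TR V) where
  carrier := {a | ∀ b ∈ L, pairR a b = 0}
  zero_mem' := fun b _ => by simp [pairR]
  add_mem' := fun {a a'} ha ha' b hb => by
    rw [pairR_add_left, ha b hb, ha' b hb, add_zero]
  smul_mem' := fun c a ha b hb => by rw [pairR_smul_left, ha b hb, mul_zero]

/-- A real lagrangian subspace: `L = L^⊥`. -/
def IsLagrangianR (L : Submodule ℝ (TR V)) : Prop := L = orthR L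

/-- An isotropic subspace of `𝕋V`. -/
def IsIsotropicR (K : Submodule ℝ (TR V)) : Prop := ∀ a ∈ K, ∀ b ∈ K, pairR a b = 0

/-- The quotient `K^⊥/K`. -/
abbrev quotK (K : Submodule ℝ (TR V)) :=
  @HasQuotient.Quotient ↥(orthR K) (Submodule ℝ ↥(orthR K))
    (@Submodule.hasQuotient ℝ ↥(orthR K) _ _ _) (K.comap (orthR K).subtype)

/-- The quotient map `K^⊥ → K^⊥/K`. -/
def mkK (K : Submodule ℝ (TR V)) : ↥(orthR K) →ₗ[ℝ] quotK K :=
  @Submodule.mkQ ℝ ↥(orthR K) _ (orthR K).addCommGroup (orthR K).module (K.comap (orthR K).subtype)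




/-- The complexification `V_ℂ = ℂ ⊗_ℝ V`. -/
abbrev Cx (V : Type*) [AddCommGroup V] [Module ℝ V] := ℂ ⊗[ℝ] V

/-- The complex dual `(V_ℂ)^*`. -/
abbrev DualC (V : Type*) [AddCommGroup V] [Module ℝ V] := Cx V →ₗ[ℂ] ℂ

/-- The complexified generalized tangent space `𝕋_ℂ V = V_ℂ ⊕ (V_ℂ)^*`. -/
abbrev TCx (V : Type*) [AddCommGroup V] [Module ℝ V] := Cx V × DualC V

/-- The ℂ-bilinear pairing on `𝕋_ℂ V`. -/
def pairC (a b : TCx V) : ℂ := (b.2 a.1 + a.2 b.1) / 2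

lemma pairC_add_left (a a' b : TCx V) : pairC (a + a') b = pairC a b + pairC a' b := by
  simp only [pairC, Prod.fst_add, Prod.snd_add, map_add, LinearMap.add_apply]
  ring

lemma pairC_smul_left (c : ℂ) (a b : TCx V) : pairC (c • a) b = c * pairC a b := by
  simp only [pairC, Prod.smul_fst, Prod.smul_snd, map_smul, LinearMap.smul_apply,
    smul_eq_mul]
  ring

/-- Orthogonal complement with respect to the ℂ-bilinear pairing on `𝕋_ℂ V`. -/
def orthC (L : Submodule ℂ (TCx V)) : Submodule ℂ (TCx V) where
  carrier := {a | ∀ b ∈ L, pairC a b = 0}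
  zero_mem' := fun b _ => by simp [pairC]
  add_mem' := fun {a a'} ha ha' b hb => by
    rw [pairC_add_left, ha b hb, ha' b hb, add_zero]
  smul_mem' := fun c a ha b hb => by rw [pairC_smul_left, ha b hb, mul_zero]

/-- A complex lagrangian subspace: `L = L^⊥`. -/
def IsLagrangianC (L : Submodule ℂ (TCx V)) : Prop := L = orthC L

private lemma conjCxAux_smul (z : ℂ) (x : Cx V) :
    TensorProduct.map Complex.conjAe.toLinearMap LinearMap.id (z • x) =
      starRingEnd ℂ z • TensorProduct.map Complex.conjAe.toLinearMap LinearMap.id x := by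
  induction x using TensorProduct.induction_on with
  | zero => simp
  | tmul w v => simp [smul_tmul', smul_eq_mul, Complex.conjAe_coe, map_mul]
  | add x y hx hy => simp only [smul_add, map_add, hx, hy]

/-- Conjugation on `V_ℂ`, as a `conj`-semilinear map. -/
def conjCx : Cx V →ₛₗ[starRingEnd ℂ] Cx V where
  toFun := TensorProduct.map Complex.conjAe.toLinearMap LinearMap.id
  map_add' := map_add _
  map_smul' := conjCxAux_smul

lemma conjCx_smul (z : ℂ) (x : Cx V) :
    conjCx (z • x) = starRingEnd ℂ z • conjCx x := conjCxAux_smul z x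

/-- Conjugation of a complex linear functional. -/
def conjDualFun (ξ : DualC V) : DualC V where
  toFun x := starRingEnd ℂ (ξ (conjCx x))
  map_add' x y := by simp
  map_smul' z x := by
    rw [conjCx_smul, map_smul, smul_eq_mul, map_mul, RingHom.id_apply]
    simp [smul_eq_mul]

/-- Conjugation on `(V_ℂ)^*`, as a `conj`-semilinear map. -/
def conjDual : DualC V →ₛₗ[starRingEnd ℂ] DualC V where
  toFun := conjDualFun
  map_add' ξ η := by ext x; simp [conjDualFun]
  map_smul' z ξ := by
    ext x
    simp [conjDualFun, smul_eq_mul, map_mul]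

/-- Conjugation on `𝕋_ℂ V`, as a `conj`-semilinear map. -/
def conjT : TCx V →ₛₗ[starRingEnd ℂ] TCx V where
  toFun a := (conjCx a.1, conjDual a.2)
  map_add' a b := by simp [Prod.ext_iff]
  map_smul' z a := by
    simp [Prod.ext_iff, Prod.smul_fst, Prod.smul_snd, map_smulₛₗ]

instance : RingHomSurjective (starRingEnd ℂ) :=
  ⟨fun z => ⟨starRingEnd ℂ z, by simp⟩⟩

/-- The conjugate `L̄` of a ℂ-subspace of `𝕋_ℂ V`. -/
def conjSub (L : Submodule ℂ (TCx V)) : Submodule ℂ (TCx V) := L.map conjT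

/-- The conjugate `Ē` of a ℂ-subspace of `V_ℂ`. -/
def conjE (E : Submodule ℂ (Cx V)) : Submodule ℂ (Cx V) := E.map conjCx

/-- The canonical inclusion `V → V_ℂ`, `v ↦ 1 ⊗ v`. -/
def iV : V →ₗ[ℝ] Cx V := TensorProduct.mk ℝ ℂ V 1





/-- ℝ-linear auxiliary version of the ℂ-linear extension of a real functional. -/
def dualExtAux (α : V →ₗ[ℝ] ℝ) : Cx V →ₗ[ℝ] ℂ :=
  TensorProduct.lift
    (LinearMap.mk₂ ℝ (fun z v => z * (α v : ℂ))
      (fun z w v => by push_cast; ring)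
      (fun r z v => by simp only [Complex.real_smul]; ring)
      (fun z v w => by push_cast [map_add]; ring)
      (fun r z v => by simp only [map_smul, smul_eq_mul, Complex.real_smul]; push_cast; ring))

private lemma dualExtAux_smulC (α : V →ₗ[ℝ] ℝ) (z : ℂ) (x : Cx V) :
    dualExtAux α (z • x) = z * dualExtAux α x := by
  induction x using TensorProduct.induction_on with
  | zero => simp
  | tmul w v =>
      simp only [dualExtAux, smul_tmul', lift.tmul, LinearMap.mk₂_apply, smul_eq_mul]
      ring
  | add x y hx hy => simp only [smul_add, map_add, hx, hy]; ring

/-- The ℂ-linear extension of a real functional `α : V → ℝ` to `V_ℂ`. -/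
def dualExtFun (α : V →ₗ[ℝ] ℝ) : DualC V where
  toFun := dualExtAux α
  map_add' := map_add _
  map_smul' z x := by simpa using dualExtAux_smulC α z x

private lemma dualExtFun_tmul (α : V →ₗ[ℝ] ℝ) (z : ℂ) (v : V) :
    dualExtFun α (z ⊗ₜ[ℝ] v) = z * (α v : ℂ) := by
  simp [dualExtFun, dualExtAux]

/-- The ℂ-linear extension map `V^* → (V_ℂ)^*`, as an ℝ-linear map. -/
def dualExt : (V →ₗ[ℝ] ℝ) →ₗ[ℝ] DualC V where
  toFun := dualExtFun
  map_add' α β := by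
    apply LinearMap.ext; intro x
    induction x using TensorProduct.induction_on with
    | zero => simp
    | tmul w v =>
        simp only [dualExtFun_tmul, LinearMap.add_apply]
        push_cast
        ring
    | add x y hx hy =>
        simp only [map_add, LinearMap.add_apply] at *
        rw [hx, hy]
  map_smul' r α := by
    apply LinearMap.ext; intro x
    induction x using TensorProduct.induction_on with
    | zero => simp
    | tmul w v =>
        simp only [dualExtFun_tmul, RingHom.id_apply, LinearMap.smul_apply,
          LinearMap.smul_apply, smul_eq_mul, Complex.real_smul]
        push_cast
        ring
    | add x y hx hy =>
        simp only [map_add, RingHom.id_apply, LinearMap.smul_apply, smul_eq_mul] at *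
        rw [hx, hy]

/-- The canonical inclusion `𝕋V → 𝕋_ℂV`. -/
def iT : TR V →ₗ[ℝ] TCx V where
  toFun a := (iV a.1, dualExt a.2)
  map_add' a b := by simp [Prod.ext_iff]
  map_smul' r a := by simp [Prod.ext_iff]



/-- Auxiliary ℝ-linear version of the ℂ-bilinear extension of a real bilinear form. -/
def bilinExtAux (B : V →ₗ[ℝ] V →ₗ[ℝ] ℝ) : Cx V →ₗ[ℝ] DualC V :=
  TensorProduct.lift
    (LinearMap.mk₂ ℝ (fun z v => z • dualExt (B v))
      (fun z w v => by simp only [add_smul])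
      (fun r z v => by simp only [smul_assoc])
      (fun z v w => by simp only [map_add, smul_add])
      (fun r z v => by simp only [map_smul]; exact smul_comm z r _))

private lemma bilinExtAux_smulC (B : V →ₗ[ℝ] V →ₗ[ℝ] ℝ) (z : ℂ) (x : Cx V) :
    bilinExtAux B (z • x) = z • bilinExtAux B x := by
  induction x using TensorProduct.induction_on with
  | zero => simp
  | tmul w v =>
      simp only [bilinExtAux, smul_tmul', lift.tmul, LinearMap.mk₂_apply, smul_eq_mul,
        mul_smul]
  | add x y hx hy => simp only [smul_add, map_add, hx, hy]

/-- The ℂ-bilinear extension of a real bilinear form `B : V × V → ℝ` to `V_ℂ`. -/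
def bilinExt (B : V →ₗ[ℝ] V →ₗ[ℝ] ℝ) : Cx V →ₗ[ℂ] DualC V where
  toFun := bilinExtAux B
  map_add' := map_add _
  map_smul' z x := by simpa using bilinExtAux_smulC B z x

/-- The `B`-transformation `e^B(X+ξ) = X + ξ + B̃(X,·)` of `𝕋_ℂV`, for a real `B`. -/
def eB (B : V →ₗ[ℝ] V →ₗ[ℝ] ℝ) : TCx V →ₗ[ℂ] TCx V where
  toFun a := (a.1, a.2 + bilinExt B a.1)
  map_add' a b := by
    simp only [Prod.fst_add, Prod.snd_add, map_add, Prod.mk_add_mk, Prod.mk.injEq]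
    exact ⟨trivial, by abel⟩
  map_smul' z a := by
    simp only [Prod.smul_fst, Prod.smul_snd, map_smul, RingHom.id_apply, Prod.smul_mk,
      Prod.mk.injEq, smul_add]

/-- The real `B`-transformation `e^B(X+α) = X + α + B(X,·)` of `𝕋V`. -/
def eBR (B : V →ₗ[ℝ] V →ₗ[ℝ] ℝ) : TR V →ₗ[ℝ] TR V where
  toFun a := (a.1, a.2 + B a.1)
  map_add' a b := by
    simp only [Prod.fst_add, Prod.snd_add, map_add, Prod.mk_add_mk, Prod.mk.injEq]
    exact ⟨trivial, by abel⟩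
  map_smul' r a := by
    simp only [Prod.smul_fst, Prod.smul_snd, map_smul, RingHom.id_apply, Prod.smul_mk,
      Prod.mk.injEq, smul_add]


/-- The range `E = pr_{V_ℂ}(L)` of a subspace of `𝕋_ℂV`. -/
def Esub (L : Submodule ℂ (TCx V)) : Submodule ℂ (Cx V) :=
  L.map (LinearMap.fst ℂ (Cx V) (DualC V))

/-- The real index `r = dim_ℂ (L ∩ L̄)`. -/
def riL (L : Submodule ℂ (TCx V)) : ℕ := finrank ℂ ↥(L ⊓ conjSub L)

/-- The real part `K = (L ∩ L̄) ∩ 𝕋V`, as a subspace of `𝕋V`. -/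
def Ksub (L : Submodule ℂ (TCx V)) : Submodule ℝ (TR V) :=
  ((L ⊓ conjSub L).restrictScalars ℝ).comap iT

/-- The distribution `D = (E + Ē) ∩ V`, as a subspace of `V`. -/
def Dsub (L : Submodule ℂ (TCx V)) : Submodule ℝ V :=
  ((Esub L ⊔ conjE (Esub L)).restrictScalars ℝ).comap iV

/-- The distribution `Δ = (E ∩ Ē) ∩ V`, as a subspace of `V`. -/
def DeltaSub (L : Submodule ℂ (TCx V)) : Submodule ℝ V :=
  ((Esub L ⊓ conjE (Esub L)).restrictScalars ℝ).comap iV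

/-- The order `s = dim V - dim D`. -/
def orderL (L : Submodule ℂ (TCx V)) : ℕ := finrank ℝ V - finrank ℝ ↥(Dsub L)

/-- The (normalized) type `k = dim_ℂ(E + Ē) - dim_ℂ E`. -/
def typeL (L : Submodule ℂ (TCx V)) : ℕ :=
  finrank ℂ ↥(Esub L ⊔ conjE (Esub L)) - finrank ℂ ↥(Esub L)


end CDirac

open CDirac Module

namespace Stmt9Aux

variable {V : Type*} [AddCommGroup V] [Module ℝ V]

/-- Real part of an element of `V_ℂ`. -/
def reP : Cx V →ₗ[ℝ] V := TensorProduct.lift ((LinearMap.lsmul ℝ V).comp Complex.reLm)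

/-- Imaginary part of an element of `V_ℂ`. -/
def imP : Cx V →ₗ[ℝ] V := TensorProduct.lift ((LinearMap.lsmul ℝ V).comp Complex.imLm)

@[simp] lemma reP_tmul (z : ℂ) (v : V) : reP (z ⊗ₜ[ℝ] v) = z.re • v := rfl
@[simp] lemma imP_tmul (z : ℂ) (v : V) : imP (z ⊗ₜ[ℝ] v) = z.im • v := rfl

@[simp] lemma conjCx_tmul (z : ℂ) (v : V) :
    conjCx (z ⊗ₜ[ℝ] v) = (starRingEnd ℂ z) ⊗ₜ[ℝ] v := by
  simp [conjCx, Complex.conjAe_coe]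

lemma iV_apply (v : V) : iV v = (1 : ℂ) ⊗ₜ[ℝ] v := rfl

lemma real_smul_one_tmul (r : ℝ) (v : V) :
    r • ((1 : ℂ) ⊗ₜ[ℝ] v) = (r : ℂ) ⊗ₜ[ℝ] v := by
  rw [smul_tmul']
  congr 1
  rw [Complex.real_smul, mul_one]

lemma decomp (x : Cx V) : x = iV (reP x) + Complex.I • iV (imP x) := by
  induction x using TensorProduct.induction_on with
  | zero => simp
  | tmul z v =>
      rw [reP_tmul, imP_tmul, iV_apply, iV_apply, tmul_smul, tmul_smul,
        real_smul_one_tmul, real_smul_one_tmul, smul_tmul', smul_eq_mul, ← add_tmul]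
      congr 1
      simp [Complex.ext_iff]
  | add x y hx hy =>
      simp only [map_add, smul_add]
      conv_lhs => rw [hx, hy]
      abel

lemma conj_decomp (x : Cx V) : conjCx x = iV (reP x) - Complex.I • iV (imP x) := by
  induction x using TensorProduct.induction_on with
  | zero => simp
  | tmul z v =>
      rw [conjCx_tmul, reP_tmul, imP_tmul, iV_apply, iV_apply, tmul_smul, tmul_smul,
        real_smul_one_tmul, real_smul_one_tmul, smul_tmul', smul_eq_mul, ← sub_tmul]
      congr 1
      simp [Complex.ext_iff]
  | add x y hx hy =>
      simp only [map_add, smul_add, hx, hy]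
      abel

lemma conjCx_real_smul (r : ℝ) (x : Cx V) : conjCx (r • x) = r • conjCx x := by
  induction x using TensorProduct.induction_on with
  | zero => simp
  | tmul z v =>
      rw [smul_tmul', conjCx_tmul, conjCx_tmul, smul_tmul']
      congr 1
      simp [Complex.ext_iff]
  | add x y hx hy => rw [smul_add, map_add, hx, hy, map_add, smul_add]

lemma conjCx_conjCx (x : Cx V) : conjCx (conjCx x) = x := by
  induction x using TensorProduct.induction_on with
  | zero => simp
  | tmul z v => simp
  | add x y hx hy => rw [map_add, map_add, hx, hy]

@[simp] lemma reP_iV (v : V) : reP (iV v) = v := by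
  simp [iV_apply]

@[simp] lemma imP_iV (v : V) : imP (iV v) = 0 := by
  simp [iV_apply]

@[simp] lemma reP_I_smul_iV (v : V) : reP (Complex.I • iV v) = 0 := by
  rw [iV_apply, smul_tmul', smul_eq_mul, mul_one]
  simp

@[simp] lemma imP_I_smul_iV (v : V) : imP (Complex.I • iV v) = v := by
  rw [iV_apply, smul_tmul', smul_eq_mul, mul_one]
  simp

lemma mem_conjE {E : Submodule ℂ (Cx V)} {y : Cx V} :
    y ∈ conjE E ↔ conjCx y ∈ E := by
  constructor
  · rintro ⟨x, hx, rfl⟩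
    rwa [conjCx_conjCx]
  · intro h
    exact ⟨conjCx y, h, conjCx_conjCx y⟩

lemma conj_mem_sup {E : Submodule ℂ (Cx V)} {x : Cx V} (hx : x ∈ E ⊔ conjE E) :
    conjCx x ∈ E ⊔ conjE E := by
  rcases Submodule.mem_sup.1 hx with ⟨a, ha, b, hb, rfl⟩
  rw [map_add]
  exact add_mem (Submodule.mem_sup_right ⟨a, ha, rfl⟩)
    (Submodule.mem_sup_left (mem_conjE.1 hb))

lemma conj_mem_inf {E : Submodule ℂ (Cx V)} {x : Cx V} (hx : x ∈ E ⊓ conjE E) :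
    conjCx x ∈ E ⊓ conjE E :=
  ⟨mem_conjE.1 hx.2, mem_conjE.2 (by rw [conjCx_conjCx]; exact hx.1)⟩

/-- For a conjugation-invariant subspace `W ⊆ V_ℂ`, the real points have real dimension
equal to the complex dimension of `W`. -/
lemma finrank_real_points [FiniteDimensional ℝ V] (W : Submodule ℂ (Cx V))
    (hW : ∀ x ∈ W, conjCx x ∈ W) :
    finrank ℝ ↥((W.restrictScalars ℝ).comap iV) = finrank ℂ ↥W := by
  haveI : Module.Finite ℂ (Cx V) := Module.Finite.base_change ℝ ℂ V
  set Dw := (W.restrictScalars ℝ).comap iV with hDw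
  have memRe : ∀ x ∈ W, reP x ∈ Dw := by
    intro x hx
    set a := iV (reP x) with ha
    set b := iV (imP x) with hb
    have h1 : x = a + Complex.I • b := decomp x
    have h2 : conjCx x = a - Complex.I • b := conj_decomp x
    have key : a = (2⁻¹ : ℂ) • (x + conjCx x) := by
      rw [h2, h1]
      module
    have : iV (reP x) ∈ W := by
      rw [← ha, key]; exact W.smul_mem _ (W.add_mem hx (hW x hx))
    exact this
  have memIm : ∀ x ∈ W, imP x ∈ Dw := by
    intro x hx
    set a := iV (reP x) with ha
    set b := iV (imP x) with hb
    have h1 : x = a + Complex.I • b := decomp x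
    have h2 : conjCx x = a - Complex.I • b := conj_decomp x
    have key : b = (-(2⁻¹) * Complex.I : ℂ) • (x - conjCx x) := by
      rw [h2, h1]
      match_scalars <;> norm_num [Complex.ext_iff]
    have : iV (imP x) ∈ W := by
      rw [← hb, key]; exact W.smul_mem _ (W.sub_mem hx (hW x hx))
    exact this
  have memBack : ∀ u ∈ Dw, ∀ v ∈ Dw, iV u + Complex.I • iV v ∈ W := by
    intro u hu v hv
    exact W.add_mem hu (W.smul_mem _ hv)
  let f : ↥W →ₗ[ℝ] ↥Dw × ↥Dw :=
    { toFun := fun x => (⟨reP x, memRe x x.2⟩, ⟨imP x, memIm x x.2⟩)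
      map_add' := fun x y => by
        refine Prod.ext (Subtype.ext ?_) (Subtype.ext ?_) <;> simp
      map_smul' := fun r x => by
        refine Prod.ext (Subtype.ext ?_) (Subtype.ext ?_) <;> simp }
  let g : ↥Dw × ↥Dw →ₗ[ℝ] ↥W :=
    { toFun := fun p => ⟨iV (p.1 : V) + Complex.I • iV (p.2 : V), memBack _ p.1.2 _ p.2.2⟩
      map_add' := fun p q => by
        apply Subtype.ext
        simp only [Prod.fst_add, Prod.snd_add, Submodule.coe_add, map_add, smul_add,
          AddSubmonoid.mk_add_mk]
        abel
      map_smul' := fun r p => by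
        apply Subtype.ext
        simp only [Prod.smul_fst, Prod.smul_snd, SetLike.val_smul, map_smul,
          RingHom.id_apply, SetLike.val_smul_of_tower, smul_add]
        rw [smul_comm] }
  have hfg : ∀ p, f (g p) = p := by
    intro p
    refine Prod.ext (Subtype.ext ?_) (Subtype.ext ?_) <;> simp [f, g]
  have hgf : ∀ x, g (f x) = x := by
    intro x
    apply Subtype.ext
    simp only [f, g, LinearMap.coe_mk, AddHom.coe_mk]
    exact (decomp (x : Cx V)).symm
  let e : ↥W ≃ₗ[ℝ] ↥Dw × ↥Dw :=
    { f with invFun := g, left_inv := hgf, right_inv := hfg }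
  have hrank2 : finrank ℝ ↥W = 2 * finrank ℝ ↥Dw := by
    rw [e.finrank_eq, Module.finrank_prod, two_mul]
  have hrank1 : finrank ℝ ↥W = 2 * finrank ℂ ↥W := by
    rw [← Module.finrank_mul_finrank ℝ ℂ ↥W, Complex.finrank_real_complex]
  omega

lemma finrank_conjE [FiniteDimensional ℝ V] (E : Submodule ℂ (Cx V)) :
    finrank ℂ ↥(conjE E) = finrank ℂ ↥E := by
  haveI : Module.Finite ℂ (Cx V) := Module.Finite.base_change ℝ ℂ V
  let e : ↥E ≃ₗ[ℝ] ↥(conjE E) :=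
    { toFun := fun x => ⟨conjCx x, Submodule.mem_map_of_mem x.2⟩
      map_add' := fun x y => by apply Subtype.ext; simp
      map_smul' := fun r x => by
        apply Subtype.ext
        simp only [SetLike.val_smul, RingHom.id_apply, SetLike.val_smul_of_tower]
        exact conjCx_real_smul r (x : Cx V)
      invFun := fun y => ⟨conjCx y, mem_conjE.1 y.2⟩
      left_inv := fun x => by apply Subtype.ext; exact conjCx_conjCx _
      right_inv := fun y => by apply Subtype.ext; exact conjCx_conjCx _ }
  have h1 : finrank ℝ ↥E = 2 * finrank ℂ ↥E := by
    rw [← Module.finrank_mul_finrank ℝ ℂ ↥E, Complex.finrank_real_complex]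
  have h2 : finrank ℝ ↥(conjE E) = 2 * finrank ℂ ↥(conjE E) := by
    rw [← Module.finrank_mul_finrank ℝ ℂ ↥(conjE E), Complex.finrank_real_complex]
  have := e.finrank_eq
  omega

end Stmt9Aux

/-- For a lagrangian `L ⊆ 𝕋_ℂV` of order `s` and type `k`, one has
`k = (dim_ℝ D - dim_ℝ Δ)/2` and `k + s = dim_ℂ V_ℂ - dim_ℂ E`. -/
theorem stmt9 (V : Type*) [AddCommGroup V] [Module ℝ V] [FiniteDimensional ℝ V]
    (L : Submodule ℂ (TCx V)) (hL : IsLagrangianC L)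
    (E : Submodule ℂ (Cx V)) (hE : E = Esub L)
    (D : Submodule ℝ V) (hD : D = ((E ⊔ conjE E).restrictScalars ℝ).comap iV)
    (Δ : Submodule ℝ V) (hΔ : Δ = ((E ⊓ conjE E).restrictScalars ℝ).comap iV)
    (k s : ℕ)
    (hk : (k : ℚ) = (finrank ℂ ↥(E ⊔ conjE E) : ℚ) - (finrank ℂ ↥E : ℚ))
    (hs : (s : ℚ) = (finrank ℝ V : ℚ) - (finrank ℝ ↥D : ℚ)) :
    (k : ℚ) = ((finrank ℝ ↥D : ℚ) - (finrank ℝ ↥Δ : ℚ)) / 2 ∧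
    (k : ℚ) + (s : ℚ) = (finrank ℂ (Cx V) : ℚ) - (finrank ℂ ↥E : ℚ) := by
  haveI : Module.Finite ℂ (Cx V) := Module.Finite.base_change ℝ ℂ V
  have hV : finrank ℂ (Cx V) = finrank ℝ V := Module.finrank_baseChange
  have hconj : finrank ℂ ↥(conjE E) = finrank ℂ ↥E := Stmt9Aux.finrank_conjE E
  have hsup : finrank ℂ ↥(E ⊔ conjE E) + finrank ℂ ↥(E ⊓ conjE E)
      = finrank ℂ ↥E + finrank ℂ ↥(conjE E) :=
    Submodule.finrank_sup_add_finrank_inf_eq E (conjE E)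
  have hDdim : finrank ℝ ↥D = finrank ℂ ↥(E ⊔ conjE E) := by
    rw [hD]
    exact Stmt9Aux.finrank_real_points _ (fun x hx => Stmt9Aux.conj_mem_sup hx)
  have hΔdim : finrank ℝ ↥Δ = finrank ℂ ↥(E ⊓ conjE E) := by
    rw [hΔ]
    exact Stmt9Aux.finrank_real_points _ (fun x hx => Stmt9Aux.conj_mem_inf hx)
  have hconj' : (finrank ℂ ↥(conjE E) : ℚ) = (finrank ℂ ↥E : ℚ) := by exact_mod_cast hconj
  have hsup' : (finrank ℂ ↥(E ⊔ conjE E) : ℚ) + (finrank ℂ ↥(E ⊓ conjE E) : ℚ)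
      = (finrank ℂ ↥E : ℚ) + (finrank ℂ ↥(conjE E) : ℚ) := by exact_mod_cast hsup
  have hDdim' : (finrank ℝ ↥D : ℚ) = (finrank ℂ ↥(E ⊔ conjE E) : ℚ) := by
    exact_mod_cast hDdim
  have hΔdim' : (finrank ℝ ↥Δ : ℚ) = (finrank ℂ ↥(E ⊓ conjE E) : ℚ) := by
    exact_mod_cast hΔdim
  have hV' : (finrank ℂ (Cx V) : ℚ) = (finrank ℝ V : ℚ) := by exact_mod_cast hV
  constructor
  · rw [hk]; linarith
  · rw [hk, hs]; linarith
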